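/- The cyclic subgroups generated by N²G̃₁² and by N intersect trivially: the only matrix that is simultaneously a power of N²G̃₁² = diag(e^{4iπ/3}, e^{2iπ/3}, 1) and a power of N = diag(-e^{-iπ/9}, -e^{-iπ/9}, e^{2iπ/9}) is the identity. -/

import Mathlib

open Matrix Complex

noncomputable def ephase (t : ℝ) : ℂ := Complex.exp ((t : ℂ) * Complex.I)

noncomputable def G1t : Matrix (Fin 3) (Fin 3) ℂ :=
  !![0, 0, ephase (7 * Real.pi / 9);
     0, -ephase (4 * Real.pi / 9), 0;
     ephase (7 * Real.pi / 9), 0, 0]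

noncomputable def G2t : Matrix (Fin 3) (Fin 3) ℂ :=
  !![0, ephase (7 * Real.pi / 9), 0;
     ephase (7 * Real.pi / 9), 0, 0;
     0, 0, -ephase (4 * Real.pi / 9)]

noncomputable def FUMt : Matrix (Fin 3) (Fin 3) ℂ :=
  !![-ephase (2 * Real.pi / 3), 0, 0;
     0, -ephase (2 * Real.pi / 3), 0;
     0, 0, ephase (2 * Real.pi / 3)]

noncomputable def Nmat : Matrix (Fin 3) (Fin 3) ℂ :=
  !![-ephase (-(Real.pi) / 9), 0, 0;
     0, -ephase (-(Real.pi) / 9), 0;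
     0, 0, ephase (2 * Real.pi / 9)]

lemma ephase_mul (s t : ℝ) : ephase s * ephase t = ephase (s + t) := by
  simp [ephase, ← Complex.exp_add]; ring_nf

lemma ephase_two_pi : ephase (2 * Real.pi) = 1 := by
  have : ((2 * Real.pi : ℝ) : ℂ) * I = 2 * Real.pi * I := by push_cast; ring
  rw [ephase, this, Complex.exp_two_pi_mul_I]

lemma Amat : Nmat ^ 2 * G1t ^ 2 =
    !![ephase (4 * Real.pi / 3), 0, 0; 0, ephase (2 * Real.pi / 3), 0; 0, 0, 1] := by
  have h2 : (2 * Real.pi) = (4 * Real.pi / 9 + 14 * Real.pi / 9) := by ring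
  ext i j
  fin_cases i <;> fin_cases j <;>
    simp [Nmat, G1t, pow_two, Matrix.mul_fin_three, ephase_mul, neg_mul, mul_neg] <;>
    (try rw [show (-(Real.pi)/9 + -(Real.pi)/9 + (7*Real.pi/9 + 7*Real.pi/9)) = 4*Real.pi/3 by ring]) <;>
    (try { rw [show (-(Real.pi)/9 + -(Real.pi)/9 + (4*Real.pi/9 + 4*Real.pi/9)) = 2*Real.pi/3 by ring] }) <;>
    (try { rw [show (2*Real.pi/9 + 2*Real.pi/9 + (7*Real.pi/9 + 7*Real.pi/9)) = 2*Real.pi by ring, ephase_two_pi] })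

lemma ephase_neg_pi : ephase (-Real.pi) = -1 := by
  have : ((-Real.pi : ℝ) : ℂ) * I = -(Real.pi * I) := by push_cast; ring
  rw [ephase, this, Complex.exp_neg, Complex.exp_pi_mul_I]
  norm_num

lemma Nmat_pow_nine : Nmat ^ 9 = 1 := by
  have e1 : (-ephase (-(Real.pi)/9)) ^ 9 = 1 := by
    rw [show (9:ℕ) = 8 + 1 by norm_num]
    simp [pow_succ, pow_two, ephase_mul, neg_mul, mul_neg]
    rw [show (-(Real.pi)/9 + -(Real.pi)/9 + -(Real.pi)/9 + -(Real.pi)/9 + -(Real.pi)/9 + -(Real.pi)/9 + -(Real.pi)/9 + -(Real.pi)/9 + -(Real.pi)/9) = -Real.pi from by ring, ephase_neg_pi]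
    norm_num
  have e2 : (ephase (2 * Real.pi / 9)) ^ 9 = 1 := by
    rw [show (9:ℕ) = 8 + 1 by norm_num]
    simp [pow_succ, pow_two, ephase_mul]
    rw [show (2*Real.pi/9 + 2*Real.pi/9 + 2*Real.pi/9 + 2*Real.pi/9 + 2*Real.pi/9 + 2*Real.pi/9 + 2*Real.pi/9 + 2*Real.pi/9 + 2*Real.pi/9) = 2*Real.pi from by ring, ephase_two_pi]
  have hd : Nmat = Matrix.diagonal ![-ephase (-(Real.pi)/9), -ephase (-(Real.pi)/9), ephase (2 * Real.pi / 9)] := by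
    ext i j
    fin_cases i <;> fin_cases j <;> simp [Nmat, Matrix.diagonal, Matrix.vecHead, Matrix.vecTail]
  rw [hd, Matrix.diagonal_pow]
  ext i j
  fin_cases i <;> fin_cases j <;> simp [Matrix.diagonal, Matrix.one_apply, e1, e2]

lemma Amat_pow_three : (Nmat ^ 2 * G1t ^ 2) ^ 3 = 1 := by
  rw [Amat]
  have hd : (!![ephase (4 * Real.pi / 3), 0, 0; 0, ephase (2 * Real.pi / 3), 0; 0, 0, 1] : Matrix (Fin 3) (Fin 3) ℂ) = Matrix.diagonal ![ephase (4 * Real.pi / 3), ephase (2 * Real.pi / 3), 1] := by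
    ext i j
    fin_cases i <;> fin_cases j <;> simp [Matrix.diagonal, Matrix.vecHead, Matrix.vecTail]
  have e1 : (ephase (4 * Real.pi / 3)) ^ 3 = 1 := by
    rw [pow_succ]
    simp [pow_succ, pow_two, ephase_mul]
    rw [show (4*Real.pi/3 + 4*Real.pi/3 + 4*Real.pi/3) = 2*Real.pi + 2*Real.pi from by ring,
      ← ephase_mul, ephase_two_pi]
    norm_num
  have e2 : (ephase (2 * Real.pi / 3)) ^ 3 = 1 := by
    rw [pow_succ]
    simp [pow_succ, pow_two, ephase_mul]
    rw [show (2*Real.pi/3 + 2*Real.pi/3 + 2*Real.pi/3) = 2*Real.pi from by ring, ephase_two_pi]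
  rw [hd, Matrix.diagonal_pow]
  ext i j
  fin_cases i <;> fin_cases j <;> simp [Matrix.diagonal, Matrix.one_apply, e1, e2]

lemma key (b : ℕ) (hb1 : 1 ≤ b) (hb2 : b ≤ 8) (h : (ephase (2*Real.pi/9))^b = 1) : False := by
  have h1 : Complex.exp ((b : ℂ) * (((2*Real.pi/9 : ℝ) : ℂ) * I)) = 1 := by
    rw [Complex.exp_nat_mul]; exact h
  obtain ⟨n, hn⟩ := Complex.exp_eq_one_iff.mp h1
  have h2 : ((b : ℂ) * ((2*Real.pi/9 : ℝ) : ℂ)) * I = ((n : ℂ) * (2 * Real.pi)) * I := by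
    rw [← mul_assoc] at hn; rw [hn]; ring
  have h3 : (b : ℂ) * ((2*Real.pi/9 : ℝ) : ℂ) = (n : ℂ) * (2 * Real.pi) := by
    exact mul_right_cancel₀ Complex.I_ne_zero h2
  have h4 : (b : ℝ) * (2*Real.pi/9) = (n : ℝ) * (2 * Real.pi) := by
    exact_mod_cast h3
  have h5 : (b : ℝ) * (2 * Real.pi) = ((9 * n : ℤ) : ℝ) * (2 * Real.pi) := by
    push_cast; nlinarith [h4]
  have h6 : (b : ℝ) = ((9 * n : ℤ) : ℝ) :=
    mul_right_cancel₀ (by positivity) h5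
  have h7 : (b : ℤ) = 9 * n := by exact_mod_cast h6
  omega

lemma Nmat_pow_entry (b : ℕ) : (Nmat ^ b) 2 2 = (ephase (2*Real.pi/9))^b := by
  have hd : Nmat = Matrix.diagonal ![-ephase (-(Real.pi)/9), -ephase (-(Real.pi)/9), ephase (2 * Real.pi / 9)] := by
    ext i j
    fin_cases i <;> fin_cases j <;> simp [Nmat, Matrix.diagonal, Matrix.vecHead, Matrix.vecTail]
  rw [hd, Matrix.diagonal_pow, Matrix.diagonal_apply_eq]
  simp [Matrix.vecHead, Matrix.vecTail]

lemma Apow_entry (a : ℕ) : ((Nmat ^ 2 * G1t ^ 2) ^ a) 2 2 = 1 := by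
  rw [Amat]
  have hd : (!![ephase (4 * Real.pi / 3), 0, 0; 0, ephase (2 * Real.pi / 3), 0; 0, 0, 1] : Matrix (Fin 3) (Fin 3) ℂ) = Matrix.diagonal ![ephase (4 * Real.pi / 3), ephase (2 * Real.pi / 3), 1] := by
    ext i j
    fin_cases i <;> fin_cases j <;> simp [Matrix.diagonal, Matrix.vecHead, Matrix.vecTail]
  rw [hd, Matrix.diagonal_pow, Matrix.diagonal_apply_eq]
  simp [Matrix.vecHead, Matrix.vecTail]

theorem stmt12 (A B : GL (Fin 3) ℂ)
    (hA : (A : Matrix (Fin 3) (Fin 3) ℂ) = Nmat ^ 2 * G1t ^ 2)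
    (hB : (B : Matrix (Fin 3) (Fin 3) ℂ) = Nmat) :
    ∀ M : GL (Fin 3) ℂ, (∃ i : ℤ, M = A ^ i) → (∃ j : ℤ, M = B ^ j) → M = 1 := by
  rintro M ⟨i, hi⟩ ⟨j, hj⟩
  have hA3 : A ^ (3 : ℕ) = 1 := by
    apply Units.ext
    push_cast [hA]
    exact Amat_pow_three
  have hB9 : B ^ (9 : ℕ) = 1 := by
    apply Units.ext
    push_cast [hB]
    exact Nmat_pow_nine
  -- reduce exponents
  have hi' : M = A ^ ((i % 3).toNat) := by
    have : A ^ i = A ^ (3 * (i / 3) + i % 3) := by rw [Int.mul_ediv_add_emod]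
    rw [hi, this, _root_.zpow_add, _root_.zpow_mul, show ((3:ℤ)) = ((3:ℕ):ℤ) by norm_num,
      zpow_natCast, hA3, _root_.one_zpow, one_mul,
      ← zpow_natCast, Int.toNat_of_nonneg (Int.emod_nonneg _ (by norm_num))]
  have hj' : M = B ^ ((j % 9).toNat) := by
    have : B ^ j = B ^ (9 * (j / 9) + j % 9) := by rw [Int.mul_ediv_add_emod]
    rw [hj, this, _root_.zpow_add, _root_.zpow_mul, show ((9:ℤ)) = ((9:ℕ):ℤ) by norm_num,
      zpow_natCast, hB9, _root_.one_zpow, one_mul,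
      ← zpow_natCast, Int.toNat_of_nonneg (Int.emod_nonneg _ (by norm_num))]
  set a := (i % 3).toNat with ha
  set b := (j % 9).toNat with hb'
  have hbb : b < 9 := by
    have := Int.emod_lt_of_pos j (show (0:ℤ) < 9 by norm_num)
    omega
  rcases Nat.eq_zero_or_pos b with hb0 | hbpos
  · rw [hj', hb0, pow_zero]
  · exfalso
    have hM1 : (M : Matrix (Fin 3) (Fin 3) ℂ) = (Nmat ^ 2 * G1t ^ 2) ^ a := by
      rw [hi']; push_cast [hA]; rfl
    have hM2 : (M : Matrix (Fin 3) (Fin 3) ℂ) = Nmat ^ b := by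
      rw [hj']; push_cast [hB]; rfl
    have : (ephase (2*Real.pi/9))^b = 1 := by
      rw [← Nmat_pow_entry, ← hM2, hM1, Apow_entry]
    exact key b hbpos (by omega) this
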